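/- Let p be an odd prime and G a finite p-group such that |G'| = p and G is a central product G = H * C where H is a non-abelian subgroup of order p³, C is cyclic, and H ∩ C = G'. Then every subgroup K of G that is an A₂-group (non-abelian with a non-abelian subgroup of index p, but all subgroups of index p² abelian) satisfies d(K) ≥ 3. -/

import Mathlib

open Subgroup
open scoped commutatorElement

lemma aux_normal_of_index_p {p : ℕ} (hp : p.Prime) {G : Type*} [Group G] [Finite G]
    (hG : IsPGroup p G) (M : Subgroup G) (hM : M.index = p) : M.Normal := by
  haveI : Fact p.Prime := ⟨hp⟩
  classical
  have h2p := hp.two_le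
  have hcore_le : M.normalCore ≤ M := Subgroup.normalCore_le M
  have h1 : M.normalCore.index = Nat.card (MulAction.toPermHom G (G ⧸ M)).range := by
    rw [Subgroup.normalCore_eq_ker, Subgroup.index_ker]
  have hcardQ : Nat.card (G ⧸ M) = p := by rw [← Subgroup.index_eq_card, hM]
  have hperm : Nat.card (Equiv.Perm (G ⧸ M)) = Nat.factorial p := by
    have : Fintype (G ⧸ M) := Fintype.ofFinite _
    rw [Nat.card_eq_fintype_card, Fintype.card_perm, ← Nat.card_eq_fintype_card, hcardQ]
  have h2 : M.normalCore.index ∣ Nat.factorial p := by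
    rw [h1, ← hperm]; exact Subgroup.card_subgroup_dvd_card _
  obtain ⟨k, hk⟩ : ∃ k, M.normalCore.index = p ^ k := by
    have hq : IsPGroup p (G ⧸ M.normalCore) := hG.to_quotient _
    obtain ⟨k, hk⟩ := (IsPGroup.iff_card).mp hq
    exact ⟨k, by rw [Subgroup.index_eq_card, hk]⟩
  rw [hk] at h2
  have hdvd : p ∣ p ^ k := by
    rw [← hk, ← hM]; exact Subgroup.index_dvd_of_le hcore_le
  have hk1 : k = 1 := by
    rcases k with _ | _ | k
    · rw [pow_zero] at hdvd; have := Nat.dvd_one.mp hdvd; omega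
    · rfl
    · exfalso
      have hp2 : p ^ 2 ∣ Nat.factorial p := dvd_trans (pow_dvd_pow p (by omega)) h2
      have hfac : Nat.factorial p = p * Nat.factorial (p - 1) := by
        conv_lhs => rw [show p = (p - 1) + 1 by omega]
        rw [Nat.factorial_succ]
        congr 1
        omega
      rw [hfac, pow_two] at hp2
      have : p ∣ Nat.factorial (p - 1) :=
        (mul_dvd_mul_iff_left (show p ≠ 0 from hp.pos.ne')).mp hp2
      have := (Nat.Prime.dvd_factorial hp).mp this
      omega
  have heq : M.normalCore = M := by
    refine le_antisymm hcore_le (Subgroup.relIndex_eq_one.mp ?_)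
    have := Subgroup.relIndex_mul_index hcore_le
    rw [hM, hk, hk1, pow_one] at this
    exact Nat.eq_of_mul_eq_mul_right hp.pos (by rw [this, one_mul])
  exact heq ▸ M.normalCore_normal

lemma aux_pow_mem_center_of_card {p : ℕ} (hp : p.Prime) {H : Type*} [Group H] [Finite H]
    (hcard : Nat.card H = p ^ 3) (hna : ¬ ∀ a b : H, a * b = b * a) :
    ∀ h : H, h ^ p ∈ Subgroup.center H := by
  haveI : Fact p.Prime := ⟨hp⟩
  have h2p := hp.two_le
  have hpg : IsPGroup p H := IsPGroup.of_card hcard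
  haveI : Nontrivial H := by
    by_contra hcon
    rw [not_nontrivial_iff_subsingleton] at hcon
    exact hna fun a b => Subsingleton.elim _ _
  haveI hZnt : Nontrivial (Subgroup.center H) := hpg.center_nontrivial
  have hncyc : ¬ IsCyclic (H ⧸ Subgroup.center H) := by
    intro hcyc
    exact hna (commutative_of_cyclic_center_quotient
      (QuotientGroup.mk' (Subgroup.center H)) (by rw [QuotientGroup.ker_mk']))
  obtain ⟨m, hm⟩ := (IsPGroup.iff_card).mp (hpg.to_subgroup (Subgroup.center H))
  obtain ⟨l, hl⟩ := (IsPGroup.iff_card).mp (hpg.to_quotient (Subgroup.center H))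
  have hmul : p ^ 3 = p ^ l * p ^ m := by
    rw [← hl, ← hm, ← hcard]
    exact Subgroup.card_eq_card_quotient_mul_card_subgroup _
  have h1 : 1 < p ^ m := by
    rw [← hm]; exact Finite.one_lt_card_iff_nontrivial.mpr hZnt
  have hm1 : 1 ≤ m := by
    rcases m with _ | m
    · rw [pow_zero] at h1; omega
    · omega
  have hlm : l + m = 3 :=
    Nat.pow_right_injective h2p
      (by show p ^ (l + m) = p ^ 3; rw [pow_add]; exact hmul.symm)
  have hl2 : l = 2 := by
    rcases Nat.lt_or_ge l 2 with h | h
    · exfalso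
      apply hncyc
      refine isCyclic_of_card_dvd_prime (p := p) ?_
      rw [hl]
      calc p ^ l ∣ p ^ 1 := pow_dvd_pow p (by omega)
        _ = p := pow_one p
    · omega
  have hexp : ∀ q : H ⧸ Subgroup.center H, q ^ p = 1 := by
    intro q
    have hdvd : orderOf q ∣ p ^ 2 := by rw [← hl2, ← hl]; exact orderOf_dvd_natCard q
    obtain ⟨j, hj2, hjeq⟩ := (Nat.dvd_prime_pow hp).mp hdvd
    rcases Nat.lt_or_ge j 2 with h | h
    · have : orderOf q ∣ p := by
        rw [hjeq]
        calc p ^ j ∣ p ^ 1 := pow_dvd_pow p (by omega)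
          _ = p := pow_one p
      exact orderOf_dvd_iff_pow_eq_one.mp this
    · exfalso
      apply hncyc
      have : orderOf q = Nat.card (H ⧸ Subgroup.center H) := by
        rw [hjeq, hl, hl2]; congr 1; omega
      exact isCyclic_of_orderOf_eq_card q this
  intro h
  rw [← QuotientGroup.eq_one_iff]
  rw [QuotientGroup.mk_pow]
  exact hexp _

/-- `G` is a minimal non-abelian group: non-abelian, but all proper subgroups abelian. -/
def IsMinimalNonabelian (G : Type*) [Group G] : Prop :=
  (¬ ∀ a b : G, a * b = b * a) ∧
    ∀ H : Subgroup G, H ≠ ⊤ → ∀ a ∈ H, ∀ b ∈ H, a * b = b * a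

/-- `G` is an `𝒜_t`-group: it has a non-abelian subgroup of index `p ^ (t-1)`,
but all subgroups of index `p ^ t` are abelian. -/
def IsAGroup (p t : ℕ) (G : Type*) [Group G] : Prop :=
  (∃ H : Subgroup G, H.index = p ^ (t - 1) ∧ ¬ ∀ a ∈ H, ∀ b ∈ H, a * b = b * a) ∧
    ∀ H : Subgroup G, H.index = p ^ t → ∀ a ∈ H, ∀ b ∈ H, a * b = b * a

theorem stmt6 {p : ℕ} (hp : p.Prime) (hodd : Odd p) {G : Type*} [Group G] [Finite G]
    (hG : IsPGroup p G) (hG' : Nat.card (commutator G) = p)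
    {H C : Subgroup G} (hH : ¬ ∀ a ∈ H, ∀ b ∈ H, a * b = b * a)
    (hHcard : Nat.card H = p ^ 3) (hC : IsCyclic ↥C)
    (hjoin : H ⊔ C = ⊤) (hcomm : ∀ h ∈ H, ∀ c ∈ C, h * c = c * h)
    (hint : H ⊓ C = commutator G) :
    ∀ K : Subgroup G, IsAGroup p 2 ↥K → 3 ≤ Group.rank ↥K := by
  haveI : Fact p.Prime := ⟨hp⟩
  have hCab : ∀ a b : ↥C, a * b = b * a := by
    intro a b
    obtain ⟨g, hg⟩ := IsCyclic.exists_generator (α := ↥C)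
    obtain ⟨i, hi⟩ := hg a
    obtain ⟨j, hj⟩ := hg b
    rw [← hi, ← hj]
    exact (Commute.zpow_zpow_self g i j).eq
  have hCcen : C ≤ Subgroup.center G := by
    intro c hc
    rw [Subgroup.mem_center_iff]
    intro g
    have hg : g ∈ H ⊔ C := by rw [hjoin]; exact Subgroup.mem_top g
    have hle : H ⊔ C ≤ Subgroup.centralizer {c} := by
      refine sup_le ?_ ?_
      · intro h hh
        rw [Subgroup.mem_centralizer_iff]
        intro y hy
        rw [Set.mem_singleton_iff] at hy; rw [hy]
        exact (hcomm h hh c hc).symm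
      · intro x hx
        rw [Subgroup.mem_centralizer_iff]
        intro y hy
        rw [Set.mem_singleton_iff] at hy; rw [hy]
        have := hCab ⟨c, hc⟩ ⟨x, hx⟩
        simpa using congrArg Subtype.val this
    have := hle hg
    rw [Subgroup.mem_centralizer_iff] at this
    exact (this c rfl).symm
  have hcen_of : ∀ z : G, (∀ a ∈ H, z * a = a * z) → z ∈ Subgroup.center G := by
    intro z hz
    rw [Subgroup.mem_center_iff]
    intro g
    have hg : g ∈ H ⊔ C := by rw [hjoin]; exact Subgroup.mem_top g
    have hle : H ⊔ C ≤ Subgroup.centralizer {z} := by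
      refine sup_le ?_ ?_
      · intro a ha
        rw [Subgroup.mem_centralizer_iff]
        intro y hy
        rw [Set.mem_singleton_iff] at hy; rw [hy]
        exact hz a ha
      · intro x hx
        rw [Subgroup.mem_centralizer_iff]
        intro y hy
        rw [Set.mem_singleton_iff] at hy; rw [hy]
        exact Subgroup.mem_center_iff.mp (hCcen hx) z
    have := hle hg
    rw [Subgroup.mem_centralizer_iff] at this
    exact (this z rfl).symm
  have hcommutator_cen : commutator G ≤ Subgroup.center G := by
    rw [← hint]; exact inf_le_right.trans hCcen
  have hcommG : ∀ a b : G, ⁅a, b⁆ ∈ Subgroup.center G := by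
    intro a b
    apply hcommutator_cen
    rw [_root_.commutator_def]
    exact Subgroup.commutator_mem_commutator (Subgroup.mem_top a) (Subgroup.mem_top b)
  have hHna : ¬ ∀ a b : ↥H, a * b = b * a := by
    intro hall
    apply hH
    intro a ha b hb
    simpa using congrArg Subtype.val (hall ⟨a, ha⟩ ⟨b, hb⟩)
  haveI hCnormal : C.Normal := by
    constructor
    intro c hc g
    have h1 : g * c = c * g := Subgroup.mem_center_iff.mp (hCcen hc) g
    rw [h1, mul_inv_cancel_right]
    exact hc
  have hpow : ∀ g : G, g ^ p ∈ Subgroup.center G := by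
    intro g
    have hg : g ∈ (↑(H ⊔ C) : Set G) := by rw [hjoin]; trivial
    rw [Subgroup.mul_normal, Set.mem_mul] at hg
    obtain ⟨h, hh, c, hc, rfl⟩ := hg
    have hcz : c ∈ Subgroup.center G := hCcen hc
    have hcom : Commute h c := Subgroup.mem_center_iff.mp hcz h
    rw [hcom.mul_pow]
    refine Subgroup.mul_mem _ ?_ (Subgroup.pow_mem _ hcz p)
    have hhp := aux_pow_mem_center_of_card hp hHcard hHna ⟨h, hh⟩
    refine hcen_of _ ?_
    intro a ha
    have h2 := Subgroup.mem_center_iff.mp hhp ⟨a, ha⟩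
    have h3 : a * h ^ p = h ^ p * a := by
      simpa using congrArg Subtype.val h2
    exact h3.symm
  intro K hK
  by_contra hlt
  push_neg at hlt
  obtain ⟨S, hScard, hSgen⟩ := Group.rank_spec ↥K
  have hS2 : S.card ≤ 2 := by omega
  obtain ⟨x, y, hsub⟩ : ∃ x y : ↥K, (S : Set ↥K) ⊆ {x, y} := by
    have h0 : S.card = 0 ∨ S.card = 1 ∨ S.card = 2 := by omega
    rcases h0 with h | h | h
    · exact ⟨1, 1, by rw [Finset.card_eq_zero.mp h]; simp⟩
    · obtain ⟨x, rfl⟩ := Finset.card_eq_one.mp h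
      exact ⟨x, x, by simp⟩
    · classical
      obtain ⟨x, y, -, hS⟩ := Finset.card_eq_two.mp h
      exact ⟨x, y, by rw [hS]; simp⟩
  have hxy : Subgroup.closure ({x, y} : Set ↥K) = ⊤ := by
    rw [eq_top_iff, ← hSgen]
    exact Subgroup.closure_mono hsub
  obtain ⟨⟨N, hNidx, hNna⟩, -⟩ := hK
  apply hNna
  have hNp : N.index = p := by simpa using hNidx
  have hKpg : IsPGroup p ↥K := hG.to_subgroup K
  haveI hNnormal : N.Normal := aux_normal_of_index_p hp hKpg N hNp
  set Λ : Subgroup ↥K := Subgroup.comap K.subtype (Subgroup.center G) with hΛdef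
  have hΛcen : ∀ u : ↥K, u ∈ Λ → ∀ v : ↥K, u * v = v * u := by
    intro u hu v
    have hcu : (u : G) ∈ Subgroup.center G := hu
    have h1 := Subgroup.mem_center_iff.mp hcu (v : G)
    exact Subtype.ext (by simpa using h1.symm)
  set J : Subgroup ↥K := N ⊓ Λ with hJdef
  have hJN : J ≤ N := inf_le_left
  haveI hJnormal : J.Normal := by
    constructor
    intro u hu g
    have hu' : u ∈ N ⊓ Λ := hJdef ▸ hu
    have h1 : u * g = g * u := hΛcen u (Subgroup.mem_inf.mp hu').2 g
    rw [← h1, mul_inv_cancel_right]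
    exact hu
  set π : ↥K →* ↥K ⧸ J := QuotientGroup.mk' J with hπdef
  have hπsurj : Function.Surjective π := QuotientGroup.mk'_surjective J
  have hπker : π.ker = J := QuotientGroup.ker_mk' J
  have hpowJ : ∀ k : ↥K, k ^ p ∈ J := by
    intro k
    rw [hJdef]
    refine Subgroup.mem_inf.mpr ⟨?_, ?_⟩
    · have := Subgroup.pow_index_mem N k
      rwa [hNp] at this
    · rw [Subgroup.mem_comap, map_pow]
      exact hpow _
  have hcommJ : ∀ u v : ↥K, ⁅u, v⁆ ∈ J := by
    intro u v
    rw [hJdef]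
    refine Subgroup.mem_inf.mpr ⟨?_, ?_⟩
    · haveI hcyc : IsCyclic (↥K ⧸ N) :=
        isCyclic_of_prime_card (by rw [← Subgroup.index_eq_card, hNp])
      have h1 : (QuotientGroup.mk' N) ⁅u, v⁆ = 1 := by
        rw [map_commutatorElement]
        rw [commutatorElement_eq_one_iff_mul_comm]
        obtain ⟨g, hg⟩ := hcyc.exists_generator
        obtain ⟨i, hi⟩ := hg ((QuotientGroup.mk' N) u)
        obtain ⟨j, hj⟩ := hg ((QuotientGroup.mk' N) v)
        rw [← hi, ← hj]
        exact (Commute.zpow_zpow_self g i j).eq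
      exact (QuotientGroup.eq_one_iff _).mp h1
    · rw [Subgroup.mem_comap, map_commutatorElement]
      exact hcommG _ _
  have hQexp : ∀ q : ↥K ⧸ J, q ^ p = 1 := by
    intro q
    obtain ⟨k, rfl⟩ := hπsurj q
    rw [← map_pow, ← MonoidHom.mem_ker, hπker]
    exact hpowJ k
  have hQab : ∀ q r : ↥K ⧸ J, q * r = r * q := by
    intro q r
    obtain ⟨u, rfl⟩ := hπsurj q
    obtain ⟨v, rfl⟩ := hπsurj r
    rw [← commutatorElement_eq_one_iff_mul_comm, ← map_commutatorElement,
      ← MonoidHom.mem_ker, hπker]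
    exact hcommJ u v
  have hinv : ∀ a : ↥K ⧸ J, a⁻¹ = a ^ (p - 1) := by
    intro a
    refine inv_eq_of_mul_eq_one_right ?_
    rw [← pow_succ']
    rw [show p - 1 + 1 = p by have := hp.pos; omega]
    exact hQexp a
  have hmemT : ∀ q : ↥K ⧸ J, ∃ i j : ℕ, q = π x ^ i * π y ^ j := by
    let T : Subgroup (↥K ⧸ J) :=
      { carrier := {q | ∃ i j : ℕ, q = π x ^ i * π y ^ j}
        one_mem' := ⟨0, 0, by simp⟩
        mul_mem' := by
          rintro a b ⟨i, j, rfl⟩ ⟨k, l, rfl⟩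
          refine ⟨i + k, j + l, ?_⟩
          rw [pow_add, pow_add]
          exact Commute.mul_mul_mul_comm
            (show Commute (π y ^ j) (π x ^ k) from hQab _ _) (π x ^ i) (π y ^ l)
        inv_mem' := by
          rintro a ⟨i, j, rfl⟩
          refine ⟨i * (p - 1), j * (p - 1), ?_⟩
          rw [mul_inv_rev, hinv, hinv, ← pow_mul, ← pow_mul]
          exact hQab _ _ }
    have hmem_iff : ∀ t : ↥K ⧸ J, t ∈ T ↔ ∃ i j : ℕ, t = π x ^ i * π y ^ j :=
      fun t => Iff.rfl
    intro q
    rw [← hmem_iff]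
    have htop : Subgroup.closure ({π x, π y} : Set (↥K ⧸ J)) = ⊤ := by
      rw [show ({π x, π y} : Set (↥K ⧸ J)) = π '' {x, y} by simp [Set.image_insert_eq],
        ← MonoidHom.map_closure, hxy, Subgroup.map_top_of_surjective _ hπsurj]
    have hq : q ∈ Subgroup.closure ({π x, π y} : Set (↥K ⧸ J)) := by
      rw [htop]; trivial
    have hpair : ({π x, π y} : Set (↥K ⧸ J)) ⊆ T := by
      rintro t ht
      rcases Set.mem_insert_iff.mp ht with rfl | ht
      · exact (hmem_iff _).mpr ⟨1, 0, by simp⟩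
      · rw [Set.mem_singleton_iff] at ht; subst ht
        exact (hmem_iff _).mpr ⟨0, 1, by simp⟩
    exact (Subgroup.closure_le T).mpr hpair hq
  have hred : ∀ (a : ↥K ⧸ J) (i : ℕ), a ^ i = a ^ (i % p) := by
    intro a i
    conv_lhs => rw [← Nat.mod_add_div i p]
    rw [pow_add, pow_mul, hQexp, one_pow, mul_one]
  have hcardQ : Nat.card (↥K ⧸ J) ≤ p * p := by
    have hsurj2 : Function.Surjective
        (fun w : Fin p × Fin p => π x ^ (w.1 : ℕ) * π y ^ (w.2 : ℕ)) := by
      intro q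
      obtain ⟨i, j, rfl⟩ := hmemT q
      refine ⟨(⟨i % p, Nat.mod_lt _ hp.pos⟩, ⟨j % p, Nat.mod_lt _ hp.pos⟩), ?_⟩
      simp only
      rw [hred (π x) i, hred (π y) j]
    have h1 := Nat.card_le_card_of_surjective _ hsurj2
    simpa using h1
  have hNbidx : (N.map π).index = p := by
    rw [Subgroup.index_map, hπker, sup_eq_left.mpr hJN,
      π.range_eq_top_of_surjective hπsurj, Subgroup.index_top, mul_one, hNp]
  have hNbcard : Nat.card (N.map π) * p = Nat.card (↥K ⧸ J) := by
    rw [← hNbidx]; exact Subgroup.card_mul_index (N.map π)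
  obtain ⟨n, hn⟩ := (IsPGroup.iff_card).mp ((hKpg.to_quotient J).to_subgroup (N.map π))
  have hnle : Nat.card (N.map π) ≤ p := by
    by_contra hcon
    push_neg at hcon
    nlinarith [hNbcard, hcardQ, hp.pos]
  have hn01 : Nat.card (N.map π) = 1 ∨ Nat.card (N.map π) = p := by
    rw [hn] at hnle ⊢
    rcases n with _ | _ | n
    · left; rfl
    · right; rw [pow_one]
    · exfalso
      have h2p := hp.two_le
      have hle2 : p * p ≤ p ^ (n + 1 + 1) := by
        calc p * p = p ^ 2 := (sq p).symm
          _ ≤ p ^ (n + 1 + 1) := Nat.pow_le_pow_right hp.pos (by omega)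
      have h3 : p * p ≤ p := le_trans hle2 hnle
      nlinarith
  intro a ha b hb
  rcases hn01 with h1 | h1
  · have hbot := Subgroup.card_eq_one.mp h1
    have haJ : a ∈ J := by
      have h2 : π a ∈ N.map π := Subgroup.mem_map_of_mem π ha
      rw [hbot, Subgroup.mem_bot] at h2
      rw [← hπker]
      exact MonoidHom.mem_ker.mpr h2
    exact hΛcen a (Subgroup.mem_inf.mp (hJdef ▸ haJ)).2 b
  · haveI hcyc : IsCyclic ↥(N.map π) := isCyclic_of_prime_card h1
    obtain ⟨⟨g, hgmem⟩, hgen⟩ := hcyc.exists_generator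
    obtain ⟨m₀, hm₀N, hm₀⟩ := hgmem
    have hdec : ∀ t : ↥K, t ∈ N → ∃ (i : ℤ) (z : ↥K), z ∈ J ∧ m₀ ^ i * z = t := by
      intro t ht
      have htm : π t ∈ N.map π := Subgroup.mem_map_of_mem π ht
      obtain ⟨i, hi⟩ := hgen ⟨π t, htm⟩
      have hi' : g ^ i = π t := by
        simpa using congrArg Subtype.val hi
      have h3 : π (m₀ ^ i) = π t := by rw [map_zpow, hm₀, hi']
      obtain ⟨z, hzJ, hz⟩ := (QuotientGroup.mk'_eq_mk' (N := J)).mp h3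
      exact ⟨i, z, hzJ, hz⟩
    obtain ⟨i, z, hzJ, hza⟩ := hdec a ha
    obtain ⟨j, w, hwJ, hwb⟩ := hdec b hb
    have hzΛ : z ∈ Λ := (Subgroup.mem_inf.mp (hJdef ▸ hzJ)).2
    have hwΛ : w ∈ Λ := (Subgroup.mem_inf.mp (hJdef ▸ hwJ)).2
    rw [← hza, ← hwb]
    have c1 : Commute (m₀ ^ i) (m₀ ^ j) := Commute.zpow_zpow_self m₀ i j
    have c2 : Commute (m₀ ^ i) w := (hΛcen w hwΛ (m₀ ^ i)).symm
    have c3 : Commute z (m₀ ^ j) := hΛcen z hzΛ (m₀ ^ j)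
    have c4 : Commute z w := hΛcen z hzΛ w
    exact (Commute.mul_left (c1.mul_right c2) (c3.mul_right c4)).eq
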